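/- Let u be an automorphism of order 3 of the quaternion group Q_8, and let G = Q_8 ⋊ ⟨u⟩. Then the inner automorphism group of G, i.e. the quotient G / Z(G) of G by its center, is isomorphic to the alternating group Alt(4). -/

import Mathlib

open QuaternionGroup Subgroup SemidirectProduct
abbrev Q8 := QuaternionGroup 2
lemma sq_conj : ∀ q x : Q8, q⁻¹ * (q⁻¹ * x * q) * q = x := by decide
lemma order_two : ∀ y : Q8, y * y = 1 → y = 1 ∨ y = a 2 := by decide
lemma central_cases : ∀ q : Q8, (∀ x, q * x = x * q) → q = 1 ∨ q = a 2 := by decide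
lemma a2_comm : ∀ x : Q8, a 2 * x = x * a 2 := by decide
lemma a2_mul_a2 : (a 2 : Q8) * a 2 = 1 := by decide
lemma a2_ne_one : (a 2 : Q8) ≠ 1 := by decide
lemma a2_inv : (a 2 : Q8)⁻¹ = a 2 := by decide
lemma a2_assoc : ∀ x : Q8, a 2 * (a 2 * x) = x := by decide

lemma aut_fix_a2 (w : MulAut Q8) : w (a 2) = a 2 := by
  have h1 : w (a 2) * w (a 2) = 1 := by rw [← map_mul, a2_mul_a2, map_one]
  rcases order_two _ h1 with h | h
  · exact absurd (w.injective (h.trans (map_one w).symm)) a2_ne_one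
  · exact h

variable (u : MulAut Q8)

abbrev Gr := SemidirectProduct Q8 ↥(Subgroup.zpowers u) ((Subgroup.zpowers u).subtype)

lemma mem_center_iff' (hu : orderOf u = 3) (g : Gr u) :
    g ∈ Subgroup.center (Gr u) ↔ g = 1 ∨ g = inl (a 2) := by
  constructor
  · intro hg
    obtain ⟨q, v⟩ := g
    have hcomm : ∀ x : Q8, q * (v : MulAut Q8) x = x * q := by
      intro x
      have := (Subgroup.mem_center_iff.mp hg (inl x)).symm
      have hl := congrArg SemidirectProduct.left this
      simpa [mul_left] using hl
    have hv3 : (v : MulAut Q8) ^ 3 = 1 := by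
      obtain ⟨k, hk⟩ := v.2
      have hu3 : u ^ (3:ℕ) = 1 := by rw [← hu]; exact pow_orderOf_eq_one u
      rw [← hk, ← zpow_natCast (u ^ k), ← zpow_mul, mul_comm, zpow_mul, zpow_natCast, hu3,
        one_zpow]
    have hvx : ∀ x : Q8, (v : MulAut Q8) x = q⁻¹ * x * q := by
      intro x
      rw [mul_assoc, ← hcomm x, ← mul_assoc, inv_mul_cancel, one_mul]
    have hv2 : (v : MulAut Q8) ^ 2 = 1 := by
      ext x
      have : (v : MulAut Q8) ((v : MulAut Q8) x) = x := by
        rw [hvx, hvx, sq_conj]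
      simpa [pow_succ, MulAut.mul_apply] using this
    have hv1 : (v : MulAut Q8) = 1 := by
      have : (v : MulAut Q8) = ((v:MulAut Q8) ^ 2)⁻¹ * (v:MulAut Q8) ^ 3 := by group
      rw [this, hv2, hv3, inv_one, one_mul]
    have hq : q = 1 ∨ q = a 2 := by
      apply central_cases
      intro x
      have := hcomm x
      rw [hv1] at this
      simpa using this
    have hv : v = 1 := Subtype.ext hv1
    rcases hq with h | h
    · left; subst h; subst hv; rfl
    · right; subst h; subst hv; rfl
  · rintro (rfl | rfl)
    · exact Subgroup.one_mem _
    · rw [Subgroup.mem_center_iff]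
      intro g'
      ext
      · simp [mul_left, aut_fix_a2 ((g'.right : MulAut Q8)), a2_comm]
      · simp [mul_right]

lemma center_eq (hu : orderOf u = 3) :
    Subgroup.center (Gr u) = Subgroup.zpowers (inl (a 2) : Gr u) := by
  have hz2 : (inl (a 2) : Gr u) * inl (a 2) = 1 := by
    rw [← map_mul, a2_mul_a2, map_one]
  ext g
  rw [mem_center_iff' u hu]
  constructor
  · rintro (rfl | rfl)
    · exact Subgroup.one_mem _
    · exact Subgroup.mem_zpowers _
  · rintro ⟨k, rfl⟩
    rcases Int.even_or_odd k with ⟨m, rfl⟩ | ⟨m, rfl⟩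
    · left
      show (inl (a 2) : Gr u) ^ (m + m) = 1
      have : (inl (a 2) : Gr u) ^ (m + m) = ((inl (a 2) : Gr u) ^ m) * ((inl (a 2) : Gr u) ^ m) := by
        rw [zpow_add]
      rw [this, ← zpow_add, ← two_mul, zpow_mul]
      norm_num
      rw [pow_two, hz2, one_zpow]
    · right
      show (inl (a 2) : Gr u) ^ (2 * m + 1) = inl (a 2)
      rw [zpow_add, zpow_one, zpow_mul,
        show ((2:ℤ)) = ((2:ℕ):ℤ) by norm_num, zpow_natCast, pow_two, hz2, one_zpow, one_mul]

lemma card_center (hu : orderOf u = 3) : Nat.card (Subgroup.center (Gr u)) = 2 := by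
  rw [center_eq u hu, Nat.card_zpowers]
  refine orderOf_eq_prime ?_ ?_
  · rw [pow_two, ← map_mul, a2_mul_a2, map_one]
  · intro h
    exact a2_ne_one (inl_injective (h.trans (map_one (inl : Q8 →* Gr u)).symm))

def grEquiv : Gr u ≃ Q8 × ↥(Subgroup.zpowers u) :=
  ⟨fun g => (g.left, g.right), fun p => ⟨p.1, p.2⟩, fun _ => rfl, fun _ => rfl⟩

lemma finite_gr (hu : orderOf u = 3) : Finite (Gr u) := by
  have hfo : IsOfFinOrder u := by
    rw [← orderOf_pos_iff, hu]; norm_num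
  have : Finite ↥(Subgroup.zpowers u) := Finite.of_equiv _ (finEquivZPowers hfo)
  exact Finite.of_equiv _ (grEquiv u).symm

lemma card_gr (hu : orderOf u = 3) : Nat.card (Gr u) = 24 := by
  rw [Nat.card_congr (grEquiv u), Nat.card_prod, Nat.card_zpowers, hu,
    Nat.card_eq_fintype_card, QuaternionGroup.card]

lemma card_quot (hu : orderOf u = 3) :
    Nat.card (Gr u ⧸ Subgroup.center (Gr u)) = 12 := by
  have hfin := finite_gr u hu
  have h := Subgroup.card_eq_card_quotient_mul_card_subgroup (Subgroup.center (Gr u))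
  rw [card_gr u hu, card_center u hu] at h
  omega

lemma u_ne_one (hu : orderOf u = 3) : u ≠ 1 := by
  intro h; rw [h, orderOf_one] at hu; norm_num at hu

lemma exists_bad (hu : orderOf u = 3) : ∃ x : Q8, u x ≠ x ∧ u x ≠ a 2 * x := by
  by_contra h'
  push_neg at h'
  have h2 : ∀ x, u (u x) = x := by
    intro x
    by_cases hx : u x = x
    · rw [hx, hx]
    · have h3 := h' x hx
      rw [h3, map_mul, aut_fix_a2, h3, a2_assoc]
  have hu2 : u ^ 2 = 1 := by
    ext x
    simpa [pow_succ, MulAut.mul_apply] using h2 x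
  have := orderOf_dvd_of_pow_eq_one hu2
  rw [hu] at this
  norm_num at this

lemma key_distinct (hu : orderOf u = 3) :
    ∃ s t : Gr u ⧸ Subgroup.center (Gr u),
      orderOf s = 3 ∧ orderOf t = 3 ∧ Subgroup.zpowers s ≠ Subgroup.zpowers t := by
  obtain ⟨x, hx1, hx2⟩ := exists_bad u hu
  set Z := Subgroup.center (Gr u) with hZ
  let π := QuotientGroup.mk' Z
  set u' : ↥(Subgroup.zpowers u) := ⟨u, Subgroup.mem_zpowers u⟩ with hu'
  have hu3 : u ^ 3 = 1 := by rw [← hu]; exact pow_orderOf_eq_one u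
  have hu'3 : u' ^ 3 = 1 := by
    apply Subtype.ext
    rw [SubmonoidClass.coe_pow]
    simpa using hu3
  have hπ1 : ∀ g₂ : Gr u, π g₂ = 1 ↔ g₂ ∈ Z := fun g₂ => by
    rw [← MonoidHom.mem_ker, QuotientGroup.ker_mk']
  set s : Gr u ⧸ Z := π (inr u') with hs
  have hs3 : s ^ 3 = 1 := by
    rw [hs, ← map_pow, ← map_pow, hu'3, map_one, map_one]
  have hu'ne : u' ≠ 1 := fun h => u_ne_one u hu (congrArg Subtype.val h)
  have hs_ne : s ≠ 1 := by
    intro h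
    have hmem : (inr u' : Gr u) ∈ Z := (hπ1 _).mp h
    rcases (mem_center_iff' u hu _).mp hmem with h1 | h1
    · exact hu'ne (by simpa using congrArg SemidirectProduct.right h1)
    · exact hu'ne (by simpa using congrArg SemidirectProduct.right h1)
  have hso : orderOf s = 3 := orderOf_eq_prime hs3 hs_ne
  set t : Gr u ⧸ Z := π (inl x) * s * (π (inl x))⁻¹ with ht
  have hto : orderOf t = 3 := by
    rw [← hso, ht]
    have : π (inl x) * s * (π (inl x))⁻¹ = (MulAut.conj (π (inl x))) s := by
      rw [MulAut.conj_apply]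
    rw [this]
    exact orderOf_injective (MulAut.conj (π (inl x))).toMonoidHom
      (MulAut.conj (π (inl x))).injective s
  have hprod : (inl x * inr u' * (inl x)⁻¹ : Gr u) = ⟨x * u x⁻¹, u'⟩ := by
    ext <;>
      simp [mul_left, mul_right, inv_left, inv_right] <;> rfl
  have hts : t = π (⟨x * u x⁻¹, u'⟩ : Gr u) := by
    rw [ht, hs, ← map_mul, ← map_inv, ← map_mul, hprod]
  refine ⟨s, t, hso, hto, ?_⟩
  intro heq
  obtain ⟨k, hk⟩ : t ∈ Subgroup.zpowers s := heq ▸ Subgroup.mem_zpowers t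
  have hk' : s ^ k = t := hk
  have hks : s ^ (k % 3) = t :=
    calc s ^ (k % 3) = s ^ (k % 3) * (s ^ (3:ℤ)) ^ (k / 3) := by
          rw [show ((3:ℤ)) = ((3:ℕ):ℤ) from rfl, zpow_natCast, hs3, one_zpow, mul_one]
      _ = s ^ (k % 3 + 3 * (k / 3)) := by rw [zpow_add, zpow_mul]
      _ = s ^ k := by rw [Int.emod_add_mul_ediv]
      _ = t := hk'
  have h0 : 0 ≤ k % 3 := Int.emod_nonneg k (by norm_num)
  have h3 : k % 3 < 3 := Int.emod_lt_of_pos k (by norm_num)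
  set r := k % 3 with hr
  interval_cases r
  · -- t = 1
    rw [zpow_zero] at hks
    have hmem : (⟨x * u x⁻¹, u'⟩ : Gr u) ∈ Z := by
      rw [← hπ1, ← hts, ← hks]
    rcases (mem_center_iff' u hu _).mp hmem with h1 | h1 <;>
      exact hu'ne (by simpa using congrArg SemidirectProduct.right h1)
  · -- s = t
    rw [zpow_one, hts] at hks
    have hmem : ((inr u' : Gr u))⁻¹ * (⟨x * u x⁻¹, u'⟩ : Gr u) ∈ Z := by
      rw [← hπ1, map_mul, map_inv, ← hks]
      exact inv_mul_cancel _
    have hcomp : ((inr u' : Gr u))⁻¹ * (⟨x * u x⁻¹, u'⟩ : Gr u) =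
        ⟨u⁻¹ (x * u x⁻¹), 1⟩ := by
      ext <;> simp [mul_left, mul_right, inv_left, inv_right, hu']
    rw [hcomp] at hmem
    rcases (mem_center_iff' u hu _).mp hmem with h1 | h1
    · have hl : u⁻¹ (x * u x⁻¹) = 1 := by simpa using congrArg SemidirectProduct.left h1
      have : x * u x⁻¹ = 1 := by
        have := congrArg u hl
        simpa using this
      have hxinv : u x⁻¹ = x⁻¹ := by
        rw [eq_comm, ← inv_mul_eq_one] at this ⊢
        simpa using this
      exact hx1 (by rw [← inv_inv x, map_inv, hxinv, inv_inv])
    · have hl : u⁻¹ (x * u x⁻¹) = a 2 := by simpa using congrArg SemidirectProduct.left h1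
      have h2 : x * u x⁻¹ = a 2 := by
        have := congrArg u hl
        rw [aut_fix_a2] at this
        simpa using this
      have hxinv : u x⁻¹ = x⁻¹ * a 2 := by
        rw [← h2]; group
      have : u x = a 2 * x := by
        rw [← inv_inv x, map_inv, hxinv, mul_inv_rev, a2_inv, inv_inv]
      exact hx2 this
  · -- s ^ 2 = t
    rw [hts] at hks
    have hmem : ((inr (u' * u') : Gr u))⁻¹ * (⟨x * u x⁻¹, u'⟩ : Gr u) ∈ Z := by
      rw [← hπ1, map_mul, map_inv, ← hks, map_mul, map_mul]
      show ((π (inr u')) * (π (inr u')))⁻¹ * (π (inr u')) ^ (2:ℤ) = 1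
      rw [show ((2:ℤ)) = ((2:ℕ):ℤ) from rfl, zpow_natCast, pow_two]
      group
    rcases (mem_center_iff' u hu _).mp hmem with h1 | h1 <;>
    · have hr1 := congrArg SemidirectProduct.right h1
      simp only [mul_right, inv_right, right_inr, one_right, right_inl] at hr1
      rw [inv_mul_eq_one] at hr1
      exact hu'ne (mul_right_cancel (hr1.trans (one_mul u').symm))


lemma eq_alternating (H : Subgroup (Equiv.Perm (Fin 4))) (hH : Nat.card H = 12) :
    H = alternatingGroup (Fin 4) := by
  have hcards : Nat.card (Equiv.Perm (Fin 4)) = 24 := by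
    simp [Nat.card_eq_fintype_card, Fintype.card_perm]
    rfl
  have hidx : H.index = 2 := by
    have := H.card_mul_index
    rw [hH, hcards] at this
    omega
  have hthree : ∀ σ : Equiv.Perm (Fin 4), σ.IsThreeCycle → σ ∈ H := by
    intro σ hσ
    have h3 : σ ^ 3 = 1 := by rw [← hσ.orderOf]; exact pow_orderOf_eq_one σ
    have h4 : (σ * σ) * (σ * σ) = σ := by
      have h4' : (σ * σ) * (σ * σ) = σ ^ 3 * σ := by simp [pow_succ, pow_two, mul_assoc]
      rw [h4', h3, one_mul]
    exact h4 ▸ Subgroup.mul_self_mem_of_index_two hidx (σ * σ)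
  have hle : alternatingGroup (Fin 4) ≤ H := by
    rw [← Equiv.Perm.closure_three_cycles_eq_alternating]
    exact (Subgroup.closure_le H).mpr hthree
  have hcard : Nat.card (alternatingGroup (Fin 4)) = 12 := by
    have h2 := @two_mul_card_alternatingGroup (Fin 4) _ _ _
    rw [Fintype.card_perm, Fintype.card_fin, show Nat.factorial 4 = 24 from rfl] at h2
    rw [Nat.card_eq_fintype_card]
    omega
  exact (Subgroup.eq_of_le_of_card_ge hle (by rw [hH, hcard])).symm

lemma iso_alt4 (Q : Type) [Group Q] [Finite Q] (hQ : Nat.card Q = 12)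
    (s t : Q) (hs : orderOf s = 3) (ht : orderOf t = 3)
    (hst : Subgroup.zpowers s ≠ Subgroup.zpowers t) :
    Nonempty (Q ≃* alternatingGroup (Fin 4)) := by
  haveI : Fact (Nat.Prime 3) := ⟨by norm_num⟩
  haveI : Fintype Q := Fintype.ofFinite Q
  haveI : Finite (Sylow 3 Q) := by infer_instance
  -- every Sylow 3-subgroup has 3 elements
  have cardP : ∀ P : Sylow 3 Q, Nat.card (P : Subgroup Q) = 3 := by
    intro P
    obtain ⟨n, hn⟩ := IsPGroup.iff_card.mp P.2
    have hdvd : Nat.card (P : Subgroup Q) ∣ 12 :=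
      hQ ▸ Subgroup.card_subgroup_dvd_card (P : Subgroup Q)
    have hmul := Subgroup.card_mul_index (P : Subgroup Q)
    rw [hQ] at hmul
    have hrel : (P : Subgroup Q).relIndex (Subgroup.normalizer (P : Set Q)) ≠ 0 := by
      rw [Subgroup.relIndex]
      exact Subgroup.index_ne_zero_of_finite
    have hnd : ¬ (3 ∣ (P : Subgroup Q).index) := P.not_dvd_index' hrel
    have hn2 : n < 2 := by
      by_contra hge
      push_neg at hge
      have : (9:ℕ) ∣ 12 := by
        calc (9:ℕ) = 3 ^ 2 := rfl
        _ ∣ 3 ^ n := pow_dvd_pow 3 hge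
        _ ∣ 12 := hn ▸ hdvd
      norm_num at this
    interval_cases n
    · rw [hn] at hmul
      simp at hmul
      rw [hmul] at hnd
      norm_num at hnd
    · rw [hn, pow_one]
  -- the two given subgroups are Sylow subgroups
  have hzs : IsPGroup 3 (Subgroup.zpowers s) :=
    IsPGroup.of_card (n := 1) (by rw [Nat.card_zpowers, hs, pow_one])
  have hzt : IsPGroup 3 (Subgroup.zpowers t) :=
    IsPGroup.of_card (n := 1) (by rw [Nat.card_zpowers, ht, pow_one])
  obtain ⟨P1, hP1⟩ := hzs.exists_le_sylow
  obtain ⟨P2, hP2⟩ := hzt.exists_le_sylow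
  have hP1' : Subgroup.zpowers s = (P1 : Subgroup Q) :=
    Subgroup.eq_of_le_of_card_ge hP1 (by rw [Nat.card_zpowers, hs, cardP P1])
  have hP2' : Subgroup.zpowers t = (P2 : Subgroup Q) :=
    Subgroup.eq_of_le_of_card_ge hP2 (by rw [Nat.card_zpowers, ht, cardP P2])
  have hP12 : P1 ≠ P2 := by
    intro h
    exact hst (by rw [hP1', hP2', h])
  -- there are four Sylow 3-subgroups
  have hcard4 : Nat.card (Sylow 3 Q) = 4 := by
    have hdvd4 : Nat.card (Sylow 3 Q) ∣ 4 := by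
      have h1 := Sylow.card_dvd_index P1
      have hmul := Subgroup.card_mul_index (P1 : Subgroup Q)
      rw [hQ, cardP P1] at hmul
      have : (P1 : Subgroup Q).index = 4 := by omega
      rwa [this] at h1
    have hmod := card_sylow_modEq_one 3 Q
    have hne1 : Nat.card (Sylow 3 Q) ≠ 1 := by
      intro h1
      haveI := (Nat.card_eq_one_iff_unique.mp h1).1
      exact hP12 (Subsingleton.elim P1 P2)
    have hpos : 0 < Nat.card (Sylow 3 Q) := Nat.card_pos
    have hle4 : Nat.card (Sylow 3 Q) ≤ 4 := Nat.le_of_dvd (by norm_num) hdvd4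
    unfold Nat.ModEq at hmod
    interval_cases h : (Nat.card (Sylow 3 Q))
    · exact absurd rfl hne1
    · norm_num at hmod
    · norm_num at hdvd4
    · rfl
  -- normalizers of Sylow subgroups are themselves
  have hnorm : ∀ P : Sylow 3 Q, Subgroup.normalizer (P : Set Q) = P := by
    intro P
    have hidx : (Subgroup.normalizer ((P : Subgroup Q) : Set Q)).index = 4 := by
      exact (Sylow.card_eq_index_normalizer P).symm.trans hcard4
    have hmul := Subgroup.card_mul_index (Subgroup.normalizer ((P : Subgroup Q) : Set Q))
    rw [hQ, hidx] at hmul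
    exact (Subgroup.eq_of_le_of_card_ge Subgroup.le_normalizer
      (by rw [cardP P]; omega)).symm
  -- the conjugation action on the Sylow subgroups is faithful
  set ψ := MulAction.toPermHom Q (Sylow 3 Q) with hψ
  have hinj : Function.Injective ψ := by
    rw [injective_iff_map_eq_one]
    intro g hg
    have hfix : ∀ P : Sylow 3 Q, g • P = P := by
      intro P
      have := congrFun (congrArg (fun (σ : Equiv.Perm (Sylow 3 Q)) => (σ : Sylow 3 Q → Sylow 3 Q)) hg) P
      simpa [hψ, MulAction.toPermHom_apply] using this
    have hgP : ∀ P : Sylow 3 Q, g ∈ (P : Subgroup Q) := by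
      intro P
      have h1 : g ∈ MulAction.stabilizer Q P := MulAction.mem_stabilizer_iff.mpr (hfix P)
      rwa [Sylow.stabilizer_eq_normalizer, hnorm P] at h1
    by_contra hgne
    have hzg : Subgroup.zpowers g ≤ (P1 : Subgroup Q) := Subgroup.zpowers_le.mpr (hgP P1)
    have hog : orderOf g ∣ 3 := by
      have := Subgroup.card_dvd_of_le hzg
      rwa [Nat.card_zpowers, cardP P1] at this
    have hog3 : orderOf g = 3 := by
      rcases (Nat.prime_three).eq_one_or_self_of_dvd _ hog with h | h
      · exact absurd (orderOf_eq_one_iff.mp h) hgne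
      · exact h
    have he1 : Subgroup.zpowers g = (P1 : Subgroup Q) :=
      Subgroup.eq_of_le_of_card_ge hzg (by rw [Nat.card_zpowers, hog3, cardP P1])
    have he2 : Subgroup.zpowers g = (P2 : Subgroup Q) :=
      Subgroup.eq_of_le_of_card_ge (Subgroup.zpowers_le.mpr (hgP P2))
        (by rw [Nat.card_zpowers, hog3, cardP P2])
    exact hP12 (Sylow.ext (he1 ▸ he2))
  -- transfer to permutations of `Fin 4`
  haveI : Fintype (Sylow 3 Q) := Fintype.ofFinite _
  have e : Sylow 3 Q ≃ Fin 4 :=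
    Fintype.equivFinOfCardEq (by rw [← Nat.card_eq_fintype_card]; exact hcard4)
  let permIso : Equiv.Perm (Sylow 3 Q) ≃* Equiv.Perm (Fin 4) :=
    { Equiv.permCongr e with
      map_mul' := fun σ τ => Equiv.ext fun b => by
        simp [Equiv.permCongr_apply, Equiv.Perm.mul_apply] }
  let f : Q →* Equiv.Perm (Fin 4) := permIso.toMonoidHom.comp ψ
  have hfinj : Function.Injective f := permIso.injective.comp hinj
  let iso1 : Q ≃* f.range := MonoidHom.ofInjective hfinj
  have cardRange : Nat.card f.range = 12 := by
    rw [← Nat.card_congr iso1.toEquiv]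
    exact hQ
  exact ⟨iso1.trans (MulEquiv.subgroupCongr (eq_alternating f.range cardRange))⟩

/-- For an automorphism `u` of order 3 of `Q₈` and `G = Q₈ ⋊ ⟨u⟩`,
the inner automorphism group `G ⧸ Z(G)` of `G` is isomorphic to `Alt(4)`. -/
theorem inn_q8_semidirect_iso_alternating_four
    (u : MulAut (QuaternionGroup 2)) (hu : orderOf u = 3) :
    Nonempty ((SemidirectProduct (QuaternionGroup 2)
      ↥(Subgroup.zpowers u) ((Subgroup.zpowers u).subtype) ⧸
        Subgroup.center (SemidirectProduct (QuaternionGroup 2)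
          ↥(Subgroup.zpowers u) ((Subgroup.zpowers u).subtype)))
      ≃* alternatingGroup (Fin 4)) := by
  haveI := finite_gr u hu
  obtain ⟨s, t, hs, ht, hst⟩ := key_distinct u hu
  exact iso_alt4 _ (card_quot u hu) s t hs ht hst
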